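/- Let R = k[[x,y,z]]/(xy) where k is a field. For positive integers i, let I_i = (x, z^i)R and J_i = (y, z^i)R. Then for every i ≥ 1 there are short exact sequences of R-modules exhibiting that R belongs to the extension closure of I_1, and I_i ⊕ I_i sits in an extension relating I_(i-1) and I_(i+1); concretely, for each i ≥ 1 there is a short exact sequence 0 → I_i → I_(i+1) ⊕ I_(i-1) → I_i → 0, where I_0 := R. -/

import Mathlib

open CategoryTheory MvPowerSeries

universe u

/-- The two-dimensional `A_∞` hypersurface singularity `k[[x,y,z]]/(xy)`. -/
abbrev AInf (k : Type u) [Field k] : Type u :=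
  MvPowerSeries (Fin 3) k ⧸
    Ideal.span {(X 0 : MvPowerSeries (Fin 3) k) * (X 1 : MvPowerSeries (Fin 3) k)}

/-- The projection `k[[x,y,z]] → k[[x,y,z]]/(xy)`. -/
noncomputable abbrev aInfMk (k : Type u) [Field k] :
    MvPowerSeries (Fin 3) k →+* AInf k :=
  Ideal.Quotient.mk _

/-- The images of `x`, `y`, `z` in `R = k[[x,y,z]]/(xy)`. -/
noncomputable abbrev xA (k : Type u) [Field k] : AInf k := aInfMk k (X 0)
noncomputable abbrev yA (k : Type u) [Field k] : AInf k := aInfMk k (X 1)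
noncomputable abbrev zA (k : Type u) [Field k] : AInf k := aInfMk k (X 2)

/-- The ideal `I_l = (x, z^l)R` for `l ≥ 1`. -/
noncomputable abbrev IIdeal (k : Type u) [Field k] (l : ℕ) : Ideal (AInf k) :=
  Ideal.span {xA k, zA k ^ l}

/-- The ideal `J_l = (y, z^l)R` for `l ≥ 1`. -/
noncomputable abbrev JIdeal (k : Type u) [Field k] (l : ℕ) : Ideal (AInf k) :=
  Ideal.span {yA k, zA k ^ l}

/-- The module `I_l`, with the convention `I_0 = R`. -/
noncomputable def IMod (k : Type u) [Field k] (l : ℕ) : ModuleCat.{u} (AInf k) :=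
  if l = 0 then ModuleCat.of (AInf k) (AInf k) else ModuleCat.of (AInf k) (IIdeal k l)

section Aux

variable (k : Type u) [Field k]

/-- The key power-series computation: if `z * C ∈ (x, z^(i+1))` in `k[[x,y,z]]`
then `C ∈ (x, z^i)`. -/
lemma aInf_key_ps (i : ℕ) (C : MvPowerSeries (Fin 3) k)
    (h : X 2 * C ∈ Ideal.span {(X 0 : MvPowerSeries (Fin 3) k), X 2 ^ (i + 1)}) :
    C ∈ Ideal.span {(X 0 : MvPowerSeries (Fin 3) k), X 2 ^ i} := by
  classical
  obtain ⟨P, Q, hPQ⟩ := Ideal.mem_span_pair.mp h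
  -- Step 1: coefficients of `C` at monomials with `m 0 = 0` and `m 2 < i` vanish.
  have step1 : ∀ m : Fin 3 →₀ ℕ, m 0 = 0 → m 2 < i → coeff m C = 0 := by
    intro m hm0 hm2
    have e1 : coeff (Finsupp.single 2 1 + m) (X 2 * C) = coeff m C := by
      rw [X_def, coeff_add_monomial_mul, one_mul]
    have e2 : coeff (Finsupp.single 2 1 + m) (P * X 0) = 0 := by
      refine X_dvd_iff.mp (Dvd.intro_left P rfl) _ ?_
      simp [Finsupp.single_apply, hm0]
    have e3 : coeff (Finsupp.single 2 1 + m) (Q * X 2 ^ (i + 1)) = 0 := by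
      refine X_pow_dvd_iff.mp (Dvd.intro_left Q rfl) _ ?_
      simp only [Finsupp.add_apply, Finsupp.single_eq_same]
      omega
    have := congrArg (coeff (Finsupp.single 2 1 + m)) hPQ
    rw [map_add, e2, e3, e1, zero_add] at this
    exact this.symm
  -- Step 2: build the quotient `B` by `z^i`.
  set B : MvPowerSeries (Fin 3) k :=
    fun n => if n 0 = 0 then coeff (n + Finsupp.single 2 i) C else 0 with hB
  have hBco : ∀ n : Fin 3 →₀ ℕ,
      coeff n B = if n 0 = 0 then coeff (n + Finsupp.single 2 i) C else 0 := by
    intro n; rw [hB]; rfl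
  have hdvd : (X 0 : MvPowerSeries (Fin 3) k) ∣ C - B * X 2 ^ i := by
    rw [X_dvd_iff]
    intro m hm0
    rw [map_sub, X_pow_eq, coeff_mul_monomial]
    by_cases hle : Finsupp.single (2 : Fin 3) i ≤ m
    · rw [if_pos hle, mul_one]
      have h0 : (m - Finsupp.single (2 : Fin 3) i) 0 = 0 := by
        rw [Finsupp.tsub_apply, hm0]; simp
      rw [hBco, if_pos h0, tsub_add_cancel_of_le hle, sub_self]
    · rw [if_neg hle, sub_zero]
      exact step1 m hm0 (by simpa using (Finsupp.single_le_iff.not.mp hle))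
  obtain ⟨A, hA⟩ := hdvd
  exact Ideal.mem_span_pair.mpr ⟨A, B, by linear_combination -hA⟩

lemma IIdeal_eq_map (l : ℕ) :
    IIdeal k l = Ideal.map (aInfMk k) (Ideal.span {(X 0 : MvPowerSeries (Fin 3) k), X 2 ^ l}) := by
  rw [Ideal.map_span, Set.image_insert_eq, Set.image_singleton, map_pow]

lemma span_xy_le (l : ℕ) :
    Ideal.span {(X 0 : MvPowerSeries (Fin 3) k) * (X 1 : MvPowerSeries (Fin 3) k)} ≤
      Ideal.span {(X 0 : MvPowerSeries (Fin 3) k), X 2 ^ l} := by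
  rw [Ideal.span_le, Set.singleton_subset_iff]
  exact Ideal.mul_mem_right _ _ (Ideal.subset_span (Set.mem_insert _ _))

/-- If `z * c ∈ I_(i+1)` then `c ∈ I_i`. -/
lemma aInf_key (i : ℕ) (c : AInf k) (h : zA k * c ∈ IIdeal k (i + 1)) :
    c ∈ IIdeal k i := by
  obtain ⟨C, rfl⟩ := Ideal.Quotient.mk_surjective c
  rw [IIdeal_eq_map] at h ⊢
  have h' : aInfMk k (X 2 * C) ∈
      Ideal.map (aInfMk k) (Ideal.span {(X 0 : MvPowerSeries (Fin 3) k), X 2 ^ (i + 1)}) := by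
    rwa [map_mul]
  rw [Ideal.mem_quotient_iff_mem (span_xy_le k (i + 1))] at h'
  exact Ideal.mem_map_of_mem _ (aInf_key_ps k i C h')

lemma mem_mulz {i : ℕ} {c : AInf k} (hc : c ∈ IIdeal k i) : zA k * c ∈ IIdeal k (i + 1) := by
  obtain ⟨u, v, huv⟩ := Ideal.mem_span_pair.mp hc
  exact Ideal.mem_span_pair.mpr ⟨zA k * u, v, by rw [← huv]; ring⟩

lemma mem_mono {i : ℕ} {c : AInf k} (hc : c ∈ IIdeal k (i + 1)) : c ∈ IIdeal k i := by
  obtain ⟨u, v, huv⟩ := Ideal.mem_span_pair.mp hc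
  exact Ideal.mem_span_pair.mpr ⟨u, v * zA k, by rw [← huv]; ring⟩

/-- Comparison map `IMod k l → R`. -/
noncomputable def nuI : (l : ℕ) → (IMod k l →ₗ[AInf k] AInf k)
  | 0 => LinearMap.id
  | (l + 1) => (IIdeal k (l + 1)).subtype

/-- Comparison map `I_l → IMod k l`. -/
noncomputable def iotaI : (l : ℕ) → (↥(IIdeal k l) →ₗ[AInf k] IMod k l)
  | 0 => (IIdeal k 0).subtype
  | (_ + 1) => LinearMap.id

lemma nuI_mem : ∀ (l : ℕ) (a : IMod k l), nuI k l a ∈ IIdeal k l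
  | 0, a => Ideal.mem_span_pair.mpr ⟨0, a, by simp [nuI]; exact mul_one _⟩
  | (_ + 1), a => a.2

lemma nuI_inj : ∀ l : ℕ, Function.Injective (nuI k l)
  | 0 => fun _ _ h => h
  | (_ + 1) => Subtype.val_injective

lemma nuI_iota : ∀ (l : ℕ) (a : ↥(IIdeal k l)), nuI k l (iotaI k l a) = a
  | 0, _ => rfl
  | (_ + 1), _ => rfl

end Aux

set_option maxHeartbeats 1000000 in
set_option synthInstance.maxHeartbeats 400000 in
/-- Part of Theorem 4.2: for `R = k[[x,y,z]]/(xy)` and the ideals `I_i = (x, z^i)R`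
(with `I_0 = R`), for every `i ≥ 1` there is a short exact sequence
`0 → I_i → I_(i+1) ⊕ I_(i-1) → I_i → 0`. -/
theorem aInf_exact_sequences (k : Type u) [Field k] :
    ∀ i : ℕ, 1 ≤ i →
      ∃ (f : IMod k i →ₗ[AInf k] (IMod k (i + 1) × IMod k (i - 1)))
        (g : (IMod k (i + 1) × IMod k (i - 1)) →ₗ[AInf k] IMod k i),
        Function.Injective f ∧ Function.Exact f g ∧ Function.Surjective g := by
  intro i hi
  obtain ⟨j, rfl⟩ : ∃ j, i = j + 1 := ⟨i - 1, (Nat.succ_pred_eq_of_pos hi).symm⟩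
  show ∃ (f : ↥(IIdeal k (j + 1)) →ₗ[AInf k] (↥(IIdeal k (j + 2)) × IMod k j))
      (g : (↥(IIdeal k (j + 2)) × IMod k j) →ₗ[AInf k] ↥(IIdeal k (j + 1))),
      Function.Injective f ∧ Function.Exact f g ∧ Function.Surjective g
  let f1 : ↥(IIdeal k (j + 1)) →ₗ[AInf k] ↥(IIdeal k (j + 2)) :=
    LinearMap.codRestrict (IIdeal k (j + 2))
      ((LinearMap.mulLeft (AInf k) (zA k)).comp (IIdeal k (j + 1)).subtype)
      (fun a => mem_mulz k a.2)
  let f2 : ↥(IIdeal k (j + 1)) →ₗ[AInf k] IMod k j :=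
    (iotaI k j).comp (LinearMap.codRestrict (IIdeal k j) (IIdeal k (j + 1)).subtype
      (fun a => mem_mono k a.2))
  let f : ↥(IIdeal k (j + 1)) →ₗ[AInf k] (↥(IIdeal k (j + 2)) × IMod k j) :=
    LinearMap.prod f1 f2
  let g0 : (↥(IIdeal k (j + 2)) × IMod k j) →ₗ[AInf k] AInf k :=
    ((IIdeal k (j + 2)).subtype.comp (LinearMap.fst _ _ _)) -
      (((LinearMap.mulLeft (AInf k) (zA k)).comp (nuI k j)).comp (LinearMap.snd _ _ _))
  have hg0 : ∀ p : (↥(IIdeal k (j + 2)) × IMod k j), g0 p ∈ IIdeal k (j + 1) := fun p =>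
    Submodule.sub_mem _ (mem_mono k p.1.2) (mem_mulz k (nuI_mem k j p.2))
  let g : (↥(IIdeal k (j + 2)) × IMod k j) →ₗ[AInf k] ↥(IIdeal k (j + 1)) :=
    LinearMap.codRestrict (IIdeal k (j + 1)) g0 hg0
  have hf2 : ∀ a : ↥(IIdeal k (j + 1)), nuI k j (f2 a) = (a : AInf k) := by
    intro a
    simp only [f2, LinearMap.comp_apply, nuI_iota, LinearMap.codRestrict_apply,
      Submodule.coe_subtype]
  have hgval : ∀ p : (↥(IIdeal k (j + 2)) × IMod k j),
      ((g p : AInf k)) = (p.1 : AInf k) - zA k * nuI k j p.2 := by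
    intro p
    simp only [g, g0, LinearMap.codRestrict_apply, LinearMap.sub_apply, LinearMap.comp_apply,
      LinearMap.fst_apply, LinearMap.snd_apply, LinearMap.mulLeft_apply, Submodule.coe_subtype]
  refine ⟨f, g, ?_, ?_, ?_⟩
  · -- injectivity
    intro a a' h
    have h2 : nuI k j (f2 a) = nuI k j (f2 a') := congrArg (nuI k j) (congrArg Prod.snd h)
    rw [hf2, hf2] at h2
    exact Subtype.ext h2
  · -- exactness
    intro p
    constructor
    · intro hp
      have hval : (p.1 : AInf k) - zA k * nuI k j p.2 = 0 := by
        rw [← hgval p, hp, ZeroMemClass.coe_zero]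
      have heq : zA k * nuI k j p.2 = (p.1 : AInf k) := (sub_eq_zero.mp hval).symm
      have hz : zA k * nuI k j p.2 ∈ IIdeal k (j + 2) := by rw [heq]; exact p.1.2
      have hmem : nuI k j p.2 ∈ IIdeal k (j + 1) := aInf_key k (j + 1) _ hz
      refine ⟨⟨nuI k j p.2, hmem⟩, Prod.ext (Subtype.ext ?_) ?_⟩
      · show zA k * nuI k j p.2 = (p.1 : AInf k)
        exact heq
      · apply nuI_inj k j
        show nuI k j (f2 ⟨nuI k j p.2, hmem⟩) = nuI k j p.2
        rw [hf2]
    · rintro ⟨a, rfl⟩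
      apply Subtype.ext
      rw [hgval]
      show zA k * (a : AInf k) - zA k * nuI k j (f2 a) = 0
      rw [hf2, sub_self]
  · -- surjectivity
    intro t
    obtain ⟨u, v, huv⟩ := Ideal.mem_span_pair.mp t.2
    have hb : u * xA k ∈ IIdeal k (j + 2) :=
      Ideal.mem_span_pair.mpr ⟨u, 0, by ring⟩
    have hc : -(v * zA k ^ j) ∈ IIdeal k j :=
      Ideal.mem_span_pair.mpr ⟨0, -v, by ring⟩
    refine ⟨(⟨u * xA k, hb⟩, iotaI k j ⟨-(v * zA k ^ j), hc⟩), ?_⟩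
    apply Subtype.ext
    rw [hgval]
    show u * xA k - zA k * nuI k j (iotaI k j ⟨-(v * zA k ^ j), hc⟩) = (t : AInf k)
    rw [nuI_iota, ← huv]
    ring
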